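/- Let n ≥ 2 and let W_n be the n-uplinked mutual dyad over a field F. The collection {e_{(a,b,1)} + e_{(b,a,1)} − e_{(a,b,j)} − e_{(b,a,j)} : 2 ≤ j ≤ n} is a basis for Z_2 = ker ∂_2, the kernel of the boundary operator restricted to Ω_2(W_n); in particular dim Z_2 = n − 1. -/

import Mathlib

open Finset

/-- The non-regular boundary operator `∂_[p] : R^{V^{p+1}} → R^{V^p}`.
It is the linear map acting on the standard basis by
`∂_[p] e_{(v_0,…,v_p)} = ∑_{j=0}^p (−1)^j e_{(v_0,…,v̂_j,…,v_p)}`,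
where `v̂_j` means that the entry `v_j` is omitted from the tuple
(here `fun i => x (j.succAbove i)` is the tuple `x` with its `j`-th entry dropped). -/
noncomputable def pathBoundary (R V : Type) [CommRing R] [Fintype V] [DecidableEq V]
    (p : ℕ) : ((Fin (p + 1) → V) → R) →ₗ[R] ((Fin p → V) → R) where
  toFun f := fun w => ∑ x : Fin (p + 1) → V,
    (∑ j : Fin (p + 1), (-1 : R) ^ (j : ℕ) *
      (if (fun i => x (j.succAbove i)) = w then 1 else 0)) * f x
  map_add' f g := by
    funext w
    simp [mul_add, Finset.sum_add_distrib]
  map_smul' r f := by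
    funext w
    simp [Finset.mul_sum, mul_left_comm]

/-- A tuple of vertices is an allowed path when each consecutive pair is an arc. -/
def IsAllowed {V : Type} (A : V → V → Prop) {q : ℕ} (x : Fin q → V) : Prop :=
  ∀ (i : ℕ) (h : i + 1 < q), A (x ⟨i, Nat.lt_of_succ_lt h⟩) (x ⟨i + 1, h⟩)

/-- `R^{𝒜}`: the subspace of `R^{V^q}` of functions supported on allowed paths
(`q` is the number of vertices in the tuple, so this is `R^{𝒜_{q-1}}`). -/
def allowedSubmodule (R V : Type) [CommRing R] (A : V → V → Prop) (q : ℕ) :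
    Submodule R ((Fin q → V) → R) where
  carrier := {f | ∀ x, ¬ IsAllowed A x → f x = 0}
  add_mem' := fun hf hg x hx => by simp only [Pi.add_apply, hf x hx, hg x hx, add_zero]
  zero_mem' := fun x hx => rfl
  smul_mem' := fun c f hf x hx => by simp only [Pi.smul_apply, hf x hx, smul_zero]

/-- `Ω_p`, the space of invariant `p`-paths:
`Ω_p = {ω ∈ R^{𝒜_p} : ∂_[p] ω ∈ R^{𝒜_{p−1}}}`. -/
noncomputable def invariantPaths (R V : Type) [CommRing R] [Fintype V] [DecidableEq V]
    (A : V → V → Prop) (p : ℕ) : Submodule R ((Fin (p + 1) → V) → R) :=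
  allowedSubmodule R V A (p + 1) ⊓ (allowedSubmodule R V A p).comap (pathBoundary R V p)

/-- The cycles `Z_p = ker ∂_p` of the path complex `(Ω_p, ∂_p)`, `∂_p = ∂_[p]|_{Ω_p}`.
In degree `0` the complex ends at `Ω_0` (the differential out of `Ω_0` is zero),
so `Z_0 = Ω_0`. -/
noncomputable def pathCycles (R V : Type) [CommRing R] [Fintype V] [DecidableEq V]
    (A : V → V → Prop) : (p : ℕ) → Submodule R ((Fin (p + 1) → V) → R)
  | 0 => invariantPaths R V A 0
  | p + 1 => invariantPaths R V A (p + 1) ⊓ LinearMap.ker (pathBoundary R V (p + 1))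

/-- The boundaries `B_p = im ∂_{p+1} = ∂_[p+1](Ω_{p+1})`. -/
noncomputable def pathBoundaries (R V : Type) [CommRing R] [Fintype V] [DecidableEq V]
    (A : V → V → Prop) (p : ℕ) : Submodule R ((Fin (p + 1) → V) → R) :=
  Submodule.map (pathBoundary R V (p + 1)) (invariantPaths R V A (p + 1))

/-- The path homology `H_p = Z_p / B_p` of the digraph `(V, A)` with coefficients in `R`. -/
abbrev pathHomology (R V : Type) [CommRing R] [Fintype V] [DecidableEq V]
    (A : V → V → Prop) (p : ℕ) : Type :=
  pathCycles R V A p ⧸ (pathBoundaries R V A p).comap (pathCycles R V A p).subtype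

/-- The Betti numbers `β_p = dim H_p`. -/
noncomputable def betti (F V : Type) [Field F] [Fintype V] [DecidableEq V]
    (A : V → V → Prop) (p : ℕ) : ℕ :=
  Module.finrank F (pathHomology F V A p)

/-- The reduced Betti numbers `β̃_p = β_p − δ_{p0}` (as integers). -/
noncomputable def tildeBetti (F V : Type) [Field F] [Fintype V] [DecidableEq V]
    (A : V → V → Prop) (p : ℕ) : ℤ :=
  (betti F V A p : ℤ) - (if p = 0 then 1 else 0)

/-- For `n ≥ 1`, the `n`-uplinked mutual dyad `W_n` has vertex set `{a, b, 1, …, n}`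
(realized as `Fin 2 ⊕ Fin n`, with `a = Sum.inl 0` and `b = Sum.inl 1`) and arc set
`{(a,b), (b,a)} ∪ {(a,i) : 1 ≤ i ≤ n} ∪ {(b,i) : 1 ≤ i ≤ n}`. -/
def uplinkArc (n : ℕ) : (Fin 2 ⊕ Fin n) → (Fin 2 ⊕ Fin n) → Prop
  | Sum.inl i, Sum.inl j => i ≠ j
  | Sum.inl _, Sum.inr _ => True
  | Sum.inr _, _ => False

/-- The `n`-downlinked mutual dyad: the `n`-uplinked mutual dyad with all arcs reversed. -/
def downlinkArc (n : ℕ) (u v : Fin 2 ⊕ Fin n) : Prop := uplinkArc n v u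

set_option linter.unusedSectionVars false

section UplinkAux

open Fin

variable {R : Type} [CommRing R] {V : Type} [Fintype V] [DecidableEq V]

private lemma eta2 (w : Fin 2 → V) : w = ![w 0, w 1] := by
  funext i; fin_cases i <;> rfl

private lemma eta3 (x : Fin 3 → V) : x = ![x 0, x 1, x 2] := by
  funext i; fin_cases i <;> rfl

private lemma cons2_eq_iff (x0 x1 y0 y1 : V) :
    (![x0, x1] = ![y0, y1]) ↔ x0 = y0 ∧ x1 = y1 := by
  constructor
  · intro h; exact ⟨congrFun h 0, congrFun h 1⟩
  · rintro ⟨rfl, rfl⟩; rfl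

private lemma cons3_eq_iff (x0 x1 x2 y0 y1 y2 : V) :
    (![x0, x1, x2] = ![y0, y1, y2]) ↔ x0 = y0 ∧ x1 = y1 ∧ x2 = y2 := by
  constructor
  · intro h; exact ⟨congrFun h 0, congrFun h 1, congrFun h 2⟩
  · rintro ⟨rfl, rfl, rfl⟩; rfl

private lemma insertNth0 (v : V) (w : Fin 2 → V) :
    (0 : Fin 3).insertNth v w = ![v, w 0, w 1] := by funext i; fin_cases i <;> rfl

private lemma insertNth1 (v : V) (w : Fin 2 → V) :
    (1 : Fin 3).insertNth v w = ![w 0, v, w 1] := by funext i; fin_cases i <;> rfl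

private lemma insertNth2 (v : V) (w : Fin 2 → V) :
    (2 : Fin 3).insertNth v w = ![w 0, w 1, v] := by funext i; fin_cases i <;> rfl

private lemma pathBoundary_apply3 (f : (Fin 3 → V) → R) (w : Fin 2 → V) :
    pathBoundary R V 2 f w
      = (∑ v : V, f ![v, w 0, w 1]) - (∑ v : V, f ![w 0, v, w 1])
        + ∑ v : V, f ![w 0, w 1, v] := by
  have h1 : pathBoundary R V 2 f w = ∑ x : Fin 3 → V,
      (∑ j : Fin 3, (-1 : R) ^ (j : ℕ) *
        (if (fun i => x (j.succAbove i)) = w then 1 else 0)) * f x := rfl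
  have h3 : ∀ j : Fin 3, ∑ x : Fin 3 → V,
      (-1 : R) ^ (j : ℕ) * (if (Fin.removeNth j x) = w then f x else 0)
        = (-1 : R) ^ (j : ℕ) * ∑ v : V, f (j.insertNth v w) := by
    intro j
    rw [← Finset.mul_sum]
    congr 1
    rw [← Equiv.sum_comp (Fin.insertNthEquiv (fun _ => V) j)]
    rw [Fintype.sum_prod_type]
    simp [Fin.insertNthEquiv]
  rw [h1]
  simp only [Finset.sum_mul]
  rw [Finset.sum_comm]
  have h2 : ∀ (j : Fin 3) (x : Fin 3 → V),
      ((-1 : R) ^ (j : ℕ) * (if (fun i => x (j.succAbove i)) = w then 1 else 0)) * f x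
        = (-1 : R) ^ (j : ℕ) * (if Fin.removeNth j x = w then f x else 0) := by
    intro j x
    rw [mul_assoc]
    congr 1
    have : (fun i => x (j.succAbove i)) = Fin.removeNth j x := rfl
    rw [this, ite_mul, one_mul, zero_mul]
  simp only [h2]
  rw [Fin.sum_univ_three, h3 0, h3 1, h3 2]
  have e0 : (((0 : Fin 3) : ℕ)) = 0 := rfl
  have e1 : (((1 : Fin 3) : ℕ)) = 1 := rfl
  have e2 : (((2 : Fin 3) : ℕ)) = 2 := rfl
  simp only [insertNth0, insertNth1, insertNth2, e0, e1, e2]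
  ring

private lemma isAllowed3_iff (A : V → V → Prop) (x : Fin 3 → V) :
    IsAllowed A x ↔ A (x 0) (x 1) ∧ A (x 1) (x 2) := by
  constructor
  · intro h
    exact ⟨h 0 (by omega), h 1 (by omega)⟩
  · rintro ⟨h1, h2⟩ i hi
    match i, hi with
    | 0, _ => exact h1
    | 1, _ => exact h2

private lemma sum_single3_left (u v t : V) (c : R) (w : Fin 2 → V) :
    (∑ x : V, Pi.single (M := fun _ : Fin 3 → V => R) ![u, v, t] c ![x, w 0, w 1])
      = Pi.single (M := fun _ : Fin 2 → V => R) ![v, t] c w := by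
  have hc : ∀ x : V, (![x, w 0, w 1] = ![u, v, t]) ↔ (x = u ∧ w = ![v, t]) := by
    intro x
    rw [cons3_eq_iff]
    constructor
    · rintro ⟨h1, h2, h3⟩; exact ⟨h1, by rw [eta2 w, h2, h3]⟩
    · rintro ⟨rfl, h⟩
      have h0 := congrFun h 0
      have h1 := congrFun h 1
      exact ⟨rfl, h0, h1⟩
  simp only [Pi.single_apply, hc, ite_and, Finset.sum_ite_eq', Finset.mem_univ, if_true]

private lemma sum_single3_mid (u v t : V) (c : R) (w : Fin 2 → V) :
    (∑ x : V, Pi.single (M := fun _ : Fin 3 → V => R) ![u, v, t] c ![w 0, x, w 1])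
      = Pi.single (M := fun _ : Fin 2 → V => R) ![u, t] c w := by
  have hc : ∀ x : V, (![w 0, x, w 1] = ![u, v, t]) ↔ (x = v ∧ w = ![u, t]) := by
    intro x
    rw [cons3_eq_iff]
    constructor
    · rintro ⟨h1, h2, h3⟩; exact ⟨h2, by rw [eta2 w, h1, h3]⟩
    · rintro ⟨rfl, h⟩
      have h0 := congrFun h 0
      have h1 := congrFun h 1
      exact ⟨h0, rfl, h1⟩
  simp only [Pi.single_apply, hc, ite_and, Finset.sum_ite_eq', Finset.mem_univ, if_true]

private lemma sum_single3_right (u v t : V) (c : R) (w : Fin 2 → V) :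
    (∑ x : V, Pi.single (M := fun _ : Fin 3 → V => R) ![u, v, t] c ![w 0, w 1, x])
      = Pi.single (M := fun _ : Fin 2 → V => R) ![u, v] c w := by
  have hc : ∀ x : V, (![w 0, w 1, x] = ![u, v, t]) ↔ (x = t ∧ w = ![u, v]) := by
    intro x
    rw [cons3_eq_iff]
    constructor
    · rintro ⟨h1, h2, h3⟩; exact ⟨h3, by rw [eta2 w, h1, h2]⟩
    · rintro ⟨rfl, h⟩
      have h0 := congrFun h 0
      have h1 := congrFun h 1
      exact ⟨h0, h1, rfl⟩
  simp only [Pi.single_apply, hc, ite_and, Finset.sum_ite_eq', Finset.mem_univ, if_true]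

private lemma pathBoundary_single3 (u v t : V) (c : R) :
    pathBoundary R V 2 (Pi.single ![u, v, t] c)
      = Pi.single ![v, t] c - Pi.single ![u, t] c + Pi.single ![u, v] c := by
  funext w
  rw [pathBoundary_apply3, sum_single3_left, sum_single3_mid, sum_single3_right]
  simp [Pi.sub_apply, Pi.add_apply]

end UplinkAux

section Uplink

variable {F : Type} [Field F] {n : ℕ}

private lemma uplink_allowed_cases (x : Fin 3 → Fin 2 ⊕ Fin n) (h : IsAllowed (uplinkArc n) x) :
    x = ![Sum.inl 0, Sum.inl 1, Sum.inl 0] ∨ x = ![Sum.inl 1, Sum.inl 0, Sum.inl 1]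
      ∨ (∃ m, x = ![Sum.inl 0, Sum.inl 1, Sum.inr m])
      ∨ (∃ m, x = ![Sum.inl 1, Sum.inl 0, Sum.inr m]) := by
  rw [isAllowed3_iff] at h
  obtain ⟨h1, h2⟩ := h
  have hx := eta3 x
  rcases e0 : x 0 with i | i <;> rcases e1 : x 1 with j | j <;> rcases e2 : x 2 with k | k <;>
      rw [e0, e1] at h1 <;> rw [e1, e2] at h2 <;>
      simp only [uplinkArc, ne_eq] at h1 h2 <;> rw [hx, e0, e1, e2]
  · fin_cases i <;> fin_cases j <;> fin_cases k <;>
      first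
        | exact absurd rfl h1
        | exact absurd rfl h2
        | exact Or.inl rfl
        | exact Or.inr (Or.inl rfl)
  · fin_cases i <;> fin_cases j <;>
      first
        | exact absurd rfl h1
        | exact Or.inr (Or.inr (Or.inl ⟨k, rfl⟩))
        | exact Or.inr (Or.inr (Or.inr ⟨k, rfl⟩))

private lemma uplink_allowed_abm (m : Fin n) :
    IsAllowed (uplinkArc n) ![Sum.inl 0, Sum.inl 1, Sum.inr m] := by
  rw [isAllowed3_iff]
  refine ⟨?_, ?_⟩ <;> simp [uplinkArc]

private lemma uplink_allowed_bam (m : Fin n) :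
    IsAllowed (uplinkArc n) ![Sum.inl 1, Sum.inl 0, Sum.inr m] := by
  rw [isAllowed3_iff]
  refine ⟨?_, ?_⟩ <;> simp [uplinkArc]

/-- The generators. -/
private def wgen (F : Type) [Field F] {n : ℕ} (z m : Fin n) : (Fin 3 → Fin 2 ⊕ Fin n) → F :=
  Pi.single ![Sum.inl 0, Sum.inl 1, Sum.inr z] (1 : F)
    + Pi.single ![Sum.inl 1, Sum.inl 0, Sum.inr z] 1
    - Pi.single ![Sum.inl 0, Sum.inl 1, Sum.inr m] 1
    - Pi.single ![Sum.inl 1, Sum.inl 0, Sum.inr m] 1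

private lemma wgen_supp (z m : Fin n) (x : Fin 3 → Fin 2 ⊕ Fin n)
    (hx : ¬ IsAllowed (uplinkArc n) x) : wgen F z m x = 0 := by
  have h1 : x ≠ ![Sum.inl 0, Sum.inl 1, Sum.inr z] := fun h => hx (h ▸ uplink_allowed_abm z)
  have h2 : x ≠ ![Sum.inl 1, Sum.inl 0, Sum.inr z] := fun h => hx (h ▸ uplink_allowed_bam z)
  have h3 : x ≠ ![Sum.inl 0, Sum.inl 1, Sum.inr m] := fun h => hx (h ▸ uplink_allowed_abm m)
  have h4 : x ≠ ![Sum.inl 1, Sum.inl 0, Sum.inr m] := fun h => hx (h ▸ uplink_allowed_bam m)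
  simp [wgen, Pi.single_eq_of_ne h1, Pi.single_eq_of_ne h2, Pi.single_eq_of_ne h3,
    Pi.single_eq_of_ne h4]

private lemma wgen_boundary (z m : Fin n) :
    pathBoundary F (Fin 2 ⊕ Fin n) 2 (wgen F z m) = 0 := by
  simp only [wgen, map_add, map_sub, pathBoundary_single3]
  abel

private lemma wgen_mem (z m : Fin n) :
    wgen F z m ∈ pathCycles F (Fin 2 ⊕ Fin n) (uplinkArc n) 2 := by
  show wgen F z m ∈ invariantPaths F (Fin 2 ⊕ Fin n) (uplinkArc n) 2
    ⊓ LinearMap.ker (pathBoundary F (Fin 2 ⊕ Fin n) 2)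
  refine Submodule.mem_inf.2 ⟨Submodule.mem_inf.2 ⟨?_, ?_⟩, ?_⟩
  · exact fun x hx => wgen_supp z m x hx
  · show pathBoundary F (Fin 2 ⊕ Fin n) 2 (wgen F z m)
      ∈ allowedSubmodule F (Fin 2 ⊕ Fin n) (uplinkArc n) 2
    rw [wgen_boundary]
    exact Submodule.zero_mem _
  · exact LinearMap.mem_ker.2 (wgen_boundary z m)

private lemma sumV (g : (Fin 2 ⊕ Fin n) → F) :
    ∑ v : Fin 2 ⊕ Fin n, g v = g (Sum.inl 0) + g (Sum.inl 1) + ∑ m : Fin n, g (Sum.inr m) := by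
  rw [Fintype.sum_sum_type, Fin.sum_univ_two]

end Uplink

section Uplink2

variable {F : Type} [Field F] {n : ℕ}

private lemma uplink_cycle_facts (ω : (Fin 3 → Fin 2 ⊕ Fin n) → F)
    (hω : ω ∈ pathCycles F (Fin 2 ⊕ Fin n) (uplinkArc n) 2) :
    ω ![Sum.inl 0, Sum.inl 1, Sum.inl 0] = 0 ∧ ω ![Sum.inl 1, Sum.inl 0, Sum.inl 1] = 0
      ∧ (∀ m : Fin n, ω ![Sum.inl 1, Sum.inl 0, Sum.inr m] = ω ![Sum.inl 0, Sum.inl 1, Sum.inr m])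
      ∧ ∑ m : Fin n, ω ![Sum.inl 0, Sum.inl 1, Sum.inr m] = 0 := by
  obtain ⟨hinv, hker⟩ := Submodule.mem_inf.1 (show ω ∈ invariantPaths F (Fin 2 ⊕ Fin n) (uplinkArc n) 2
    ⊓ LinearMap.ker (pathBoundary F (Fin 2 ⊕ Fin n) 2) from hω)
  obtain ⟨hsupp, -⟩ := Submodule.mem_inf.1 hinv
  have hz : ∀ x : Fin 3 → Fin 2 ⊕ Fin n,
      ¬(uplinkArc n (x 0) (x 1) ∧ uplinkArc n (x 1) (x 2)) → ω x = 0 :=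
    fun x hx => hsupp x fun hA => hx ((isAllowed3_iff _ x).1 hA)
  have hk : pathBoundary F (Fin 2 ⊕ Fin n) 2 ω = 0 := LinearMap.mem_ker.1 hker
  have hbz : ∀ w : Fin 2 → Fin 2 ⊕ Fin n,
      (∑ v : Fin 2 ⊕ Fin n, ω ![v, w 0, w 1]) - (∑ v : Fin 2 ⊕ Fin n, ω ![w 0, v, w 1])
        + (∑ v : Fin 2 ⊕ Fin n, ω ![w 0, w 1, v]) = 0 := by
    intro w
    have h := pathBoundary_apply3 (R := F) (V := Fin 2 ⊕ Fin n) ω w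
    rw [hk] at h
    simpa using h.symm
  have f1 : ω ![Sum.inl 0, Sum.inl 1, Sum.inl 0] = 0 := by
    have h := hbz ![Sum.inl 0, Sum.inl 0]
    simp only [Matrix.cons_val_zero, Matrix.cons_val_one, Matrix.head_cons, sumV] at h
    rw [hz ![Sum.inl 0, Sum.inl 0, Sum.inl 0] (by simp [uplinkArc]),
      hz ![Sum.inl 1, Sum.inl 0, Sum.inl 0] (by simp [uplinkArc]),
      hz ![Sum.inl 0, Sum.inl 0, Sum.inl 1] (by simp [uplinkArc]),
      show (∑ m : Fin n, ω ![Sum.inr m, Sum.inl 0, Sum.inl 0]) = 0 from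
        Finset.sum_eq_zero fun m _ => hz _ (by simp [uplinkArc]),
      show (∑ m : Fin n, ω ![Sum.inl 0, Sum.inr m, Sum.inl 0]) = 0 from
        Finset.sum_eq_zero fun m _ => hz _ (by simp [uplinkArc]),
      show (∑ m : Fin n, ω ![Sum.inl 0, Sum.inl 0, Sum.inr m]) = 0 from
        Finset.sum_eq_zero fun m _ => hz _ (by simp [uplinkArc])] at h
    linear_combination -h
  have f2 : ω ![Sum.inl 1, Sum.inl 0, Sum.inl 1] = 0 := by
    have h := hbz ![Sum.inl 1, Sum.inl 1]
    simp only [Matrix.cons_val_zero, Matrix.cons_val_one, Matrix.head_cons, sumV] at h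
    rw [hz ![Sum.inl 0, Sum.inl 1, Sum.inl 1] (by simp [uplinkArc]),
      hz ![Sum.inl 1, Sum.inl 1, Sum.inl 1] (by simp [uplinkArc]),
      hz ![Sum.inl 1, Sum.inl 1, Sum.inl 0] (by simp [uplinkArc]),
      show (∑ m : Fin n, ω ![Sum.inr m, Sum.inl 1, Sum.inl 1]) = 0 from
        Finset.sum_eq_zero fun m _ => hz _ (by simp [uplinkArc]),
      show (∑ m : Fin n, ω ![Sum.inl 1, Sum.inr m, Sum.inl 1]) = 0 from
        Finset.sum_eq_zero fun m _ => hz _ (by simp [uplinkArc]),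
      show (∑ m : Fin n, ω ![Sum.inl 1, Sum.inl 1, Sum.inr m]) = 0 from
        Finset.sum_eq_zero fun m _ => hz _ (by simp [uplinkArc])] at h
    linear_combination -h
  have f3 : ∀ m : Fin n, ω ![Sum.inl 1, Sum.inl 0, Sum.inr m]
      = ω ![Sum.inl 0, Sum.inl 1, Sum.inr m] := by
    intro m
    have h := hbz ![Sum.inl 0, Sum.inr m]
    simp only [Matrix.cons_val_zero, Matrix.cons_val_one, Matrix.head_cons, sumV] at h
    rw [hz ![Sum.inl 0, Sum.inl 0, Sum.inr m] (by simp [uplinkArc]),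
      hz ![Sum.inl 0, Sum.inr m, Sum.inl 0] (by simp [uplinkArc]),
      hz ![Sum.inl 0, Sum.inr m, Sum.inl 1] (by simp [uplinkArc]),
      show (∑ m' : Fin n, ω ![Sum.inr m', Sum.inl 0, Sum.inr m]) = 0 from
        Finset.sum_eq_zero fun m' _ => hz _ (by simp [uplinkArc]),
      show (∑ m' : Fin n, ω ![Sum.inl 0, Sum.inr m', Sum.inr m]) = 0 from
        Finset.sum_eq_zero fun m' _ => hz _ (by simp [uplinkArc]),
      show (∑ m' : Fin n, ω ![Sum.inl 0, Sum.inr m, Sum.inr m']) = 0 from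
        Finset.sum_eq_zero fun m' _ => hz _ (by simp [uplinkArc])] at h
    linear_combination h
  refine ⟨f1, f2, f3, ?_⟩
  have h := hbz ![Sum.inl 0, Sum.inl 1]
  simp only [Matrix.cons_val_zero, Matrix.cons_val_one, Matrix.head_cons, sumV] at h
  rw [hz ![Sum.inl 0, Sum.inl 0, Sum.inl 1] (by simp [uplinkArc]),
    hz ![Sum.inl 0, Sum.inl 1, Sum.inl 1] (by simp [uplinkArc]),
    show (∑ m : Fin n, ω ![Sum.inr m, Sum.inl 0, Sum.inl 1]) = 0 from
      Finset.sum_eq_zero fun m _ => hz _ (by simp [uplinkArc]),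
    show (∑ m : Fin n, ω ![Sum.inl 0, Sum.inr m, Sum.inl 1]) = 0 from
      Finset.sum_eq_zero fun m _ => hz _ (by simp [uplinkArc]),
    f1, f2] at h
  linear_combination h

end Uplink2

section Uplink3

variable {F : Type} [Field F] {n : ℕ}

private lemma wgen_eval_ab (z m j : Fin n) :
    wgen F z j ![Sum.inl 0, Sum.inl 1, Sum.inr m]
      = (if m = z then (1 : F) else 0) - (if m = j then 1 else 0) := by
  simp [wgen, Pi.single_apply, cons3_eq_iff]

private lemma wgen_eval_ba (z m j : Fin n) :
    wgen F z j ![Sum.inl 1, Sum.inl 0, Sum.inr m]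
      = (if m = z then (1 : F) else 0) - (if m = j then 1 else 0) := by
  simp [wgen, Pi.single_apply, cons3_eq_iff]

private lemma wgen_eval_aba (z j : Fin n) :
    wgen F z j ![Sum.inl 0, Sum.inl 1, Sum.inl 0] = 0 := by
  simp [wgen, Pi.single_apply, cons3_eq_iff]

private lemma wgen_eval_bab (z j : Fin n) :
    wgen F z j ![Sum.inl 1, Sum.inl 0, Sum.inl 1] = 0 := by
  simp [wgen, Pi.single_apply, cons3_eq_iff]

private lemma sum_split (hn : 0 < n) (γ : Fin n → F) :
    ∑ m : Fin n, γ m = γ ⟨0, hn⟩ + ∑ j : {j : Fin n // j ≠ ⟨0, hn⟩}, γ j.1 := by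
  rw [Fintype.sum_eq_add_sum_compl (⟨0, hn⟩ : Fin n) γ]
  congr 1
  exact Finset.sum_subtype _ (by intro x; simp) γ

private lemma uplink_decomp (hn : 0 < n) (ω : (Fin 3 → Fin 2 ⊕ Fin n) → F)
    (hω : ω ∈ pathCycles F (Fin 2 ⊕ Fin n) (uplinkArc n) 2) :
    ω = ∑ j : {j : Fin n // j ≠ ⟨0, hn⟩},
      (-(ω ![Sum.inl 0, Sum.inl 1, Sum.inr j.1])) • wgen F ⟨0, hn⟩ j.1 := by
  obtain ⟨f1, f2, f3, f4⟩ := uplink_cycle_facts ω hω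
  obtain ⟨hinv, -⟩ := Submodule.mem_inf.1 (show ω ∈ invariantPaths F (Fin 2 ⊕ Fin n) (uplinkArc n) 2
    ⊓ LinearMap.ker (pathBoundary F (Fin 2 ⊕ Fin n) 2) from hω)
  obtain ⟨hsupp, -⟩ := Submodule.mem_inf.1 hinv
  set z : Fin n := ⟨0, hn⟩ with hzdef
  set γ : Fin n → F := fun m => ω ![Sum.inl 0, Sum.inl 1, Sum.inr m] with hγ
  have hsum : ∀ m : Fin n,
      (∑ j : {j : Fin n // j ≠ z}, -(γ j.1) * ((if m = z then (1 : F) else 0)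
        - (if m = j.1 then 1 else 0))) = γ m := by
    intro m
    by_cases hm : m = z
    · have hterm : ∀ j : {j : Fin n // j ≠ z},
          -(γ j.1) * ((if m = z then (1 : F) else 0) - (if m = j.1 then 1 else 0))
            = -(γ j.1) := by
        intro j
        rw [if_pos hm, if_neg (fun h => j.2 (by rw [← h, hm])), sub_zero, mul_one]
      rw [Finset.sum_congr rfl fun j _ => hterm j]
      have hs := sum_split hn γ
      rw [f4] at hs
      rw [Finset.sum_neg_distrib, hm]
      linear_combination hs
    · have : ∀ j : {j : Fin n // j ≠ z},
          -(γ j.1) * ((if m = z then (1 : F) else 0) - (if m = j.1 then 1 else 0))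
            = if (⟨m, hm⟩ : {j : Fin n // j ≠ z}) = j then γ m else 0 := by
        intro j
        rw [if_neg hm]
        by_cases hj : m = j.1
        · rw [if_pos hj, if_pos (Subtype.ext hj), hj]
          ring
        · rw [if_neg hj, if_neg (fun h => hj (by rw [← h]))]
          ring
      rw [Finset.sum_congr rfl fun j _ => this j, Finset.sum_ite_eq]
      simp
  funext x
  rw [Finset.sum_apply]
  simp only [Pi.smul_apply, smul_eq_mul]
  by_cases hall : IsAllowed (uplinkArc n) x
  · rcases uplink_allowed_cases x hall with h | h | ⟨m, h⟩ | ⟨m, h⟩ <;> subst h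
    · rw [f1]
      exact (Finset.sum_eq_zero fun j _ => by rw [wgen_eval_aba, mul_zero]).symm
    · rw [f2]
      exact (Finset.sum_eq_zero fun j _ => by rw [wgen_eval_bab, mul_zero]).symm
    · have := hsum m
      simp only [wgen_eval_ab]
      exact this.symm
    · rw [f3 m]
      simp only [wgen_eval_ba]
      exact (hsum m).symm
  · rw [hsupp x hall]
    exact (Finset.sum_eq_zero fun j _ => by rw [wgen_supp _ _ x hall, mul_zero]).symm

end Uplink3


/-- For `n ≥ 2` and `W_n` the `n`-uplinked mutual dyad over a field `F`,
the collection `{e_{(a,b,1)} + e_{(b,a,1)} − e_{(a,b,j)} − e_{(b,a,j)} : 2 ≤ j ≤ n}`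
(indexed here by the nonzero elements of `Fin n`, with `1` realized as `0 : Fin n`)
is a basis for `Z_2 = ker ∂_2`, the kernel of the boundary restricted to `Ω_2(W_n)`;
in particular `dim Z_2 = n − 1`. -/
theorem uplinked_dyad_basis_Z2 (F : Type) [Field F] (n : ℕ) (hn : 2 ≤ n) :
    (∃ bas : Module.Basis {j : Fin n // j ≠ ⟨0, by omega⟩} F
        (pathCycles F (Fin 2 ⊕ Fin n) (uplinkArc n) 2),
      ∀ j : {j : Fin n // j ≠ ⟨0, by omega⟩},
        (bas j : (Fin 3 → Fin 2 ⊕ Fin n) → F)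
          = Pi.single ![Sum.inl 0, Sum.inl 1, Sum.inr ⟨0, by omega⟩] (1 : F)
            + Pi.single ![Sum.inl 1, Sum.inl 0, Sum.inr ⟨0, by omega⟩] 1
            - Pi.single ![Sum.inl 0, Sum.inl 1, Sum.inr j.1] 1
            - Pi.single ![Sum.inl 1, Sum.inl 0, Sum.inr j.1] 1)
    ∧ Module.finrank F (pathCycles F (Fin 2 ⊕ Fin n) (uplinkArc n) 2) = n - 1 := by
  have hn0 : 0 < n := by omega
  set z : Fin n := ⟨0, hn0⟩ with hzdef
  let W : {j : Fin n // j ≠ z} → pathCycles F (Fin 2 ⊕ Fin n) (uplinkArc n) 2 :=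
    fun j => ⟨wgen F z j.1, wgen_mem z j.1⟩
  have h1 : LinearIndependent F (fun j : {j : Fin n // j ≠ z} => wgen F z j.1) := by
    rw [Fintype.linearIndependent_iff]
    intro g hg j
    have h := congrFun hg ![Sum.inl 0, Sum.inl 1, Sum.inr j.1]
    rw [Finset.sum_apply] at h
    simp only [Pi.smul_apply, smul_eq_mul, wgen_eval_ab, Pi.zero_apply] at h
    have ht : ∀ k : {j : Fin n // j ≠ z},
        g k * ((if (j.1 : Fin n) = z then (1 : F) else 0) - (if j.1 = k.1 then 1 else 0))
          = if j = k then -g k else 0 := by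
      intro k
      rw [if_neg j.2]
      by_cases hk : j = k
      · rw [if_pos (by rw [hk]), if_pos hk]; ring
      · rw [if_neg (fun h' => hk (Subtype.ext h')), if_neg hk]; ring
    rw [Finset.sum_congr rfl fun k _ => ht k, Finset.sum_ite_eq] at h
    simp only [Finset.mem_univ, if_true, neg_eq_zero] at h
    exact h
  have hli : LinearIndependent F W := by
    apply LinearIndependent.of_comp
      (pathCycles F (Fin 2 ⊕ Fin n) (uplinkArc n) 2).subtype
    exact h1
  have hsp : ⊤ ≤ Submodule.span F (Set.range W) := by
    rintro ⟨ω, hω⟩ -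
    have hd := uplink_decomp hn0 ω hω
    have heq : (⟨ω, hω⟩ : pathCycles F (Fin 2 ⊕ Fin n) (uplinkArc n) 2)
        = ∑ j : {j : Fin n // j ≠ z},
            (-(ω ![Sum.inl 0, Sum.inl 1, Sum.inr j.1])) • W j := by
      refine Subtype.ext ?_
      simp only [AddSubmonoidClass.coe_finset_sum, SetLike.val_smul, W]
      exact hd
    rw [heq]
    exact Submodule.sum_mem _ fun j _ =>
      Submodule.smul_mem _ _ (Submodule.subset_span ⟨j, rfl⟩)
  refine ⟨⟨Module.Basis.mk hli hsp, fun j => ?_⟩, ?_⟩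
  · rw [Module.Basis.mk_apply]
    rfl
  · rw [Module.finrank_eq_card_basis (Module.Basis.mk hli hsp)]
    simp only [ne_eq]
    rw [Fintype.card_subtype_compl]
    simp [Fintype.card_subtype_eq]
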